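/- arXiv:math/0310299 — 2 statements merged into one kernel-verified Lean document; each statement's English description precedes it below -/
import Mathlib

section
/- Let 0 = r_0 < r_1 < ⋯ < r_l = r be integers with l ≥ 2. Then r_1(r - r_1) + (r - r_2)(r_2 - r_1) + ⋯ + (r - r_l)(r_l - r_{l-1}) ≥ r - 1. -/
/-- For integers `0 = r_0 < r_1 < ⋯ < r_l = r` with `l ≥ 2`,
`r_1 (r - r_1) + ∑_{i=1}^{l-1} (r - r_{i+1})(r_{i+1} - r_i) ≥ r - 1`. -/
theorem stmt_2 (l : ℕ) (hl : 2 ≤ l) (r : ℤ) (rf : ℕ → ℤ)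
    (h0 : rf 0 = 0) (hlast : rf l = r) (hmono : ∀ i < l, rf i < rf (i + 1)) :
    r - 1 ≤ rf 1 * (r - rf 1)
      + ∑ i ∈ Finset.Ico 1 l, (r - rf (i + 1)) * (rf (i + 1) - rf i) := by
  -- monotonicity up to l
  have mono : ∀ j ≤ l, ∀ i ≤ j, rf i ≤ rf j := by
    intro j hj
    induction j with
    | zero => intro i hi; simp_all
    | succ n ih =>
      intro i hi
      rcases Nat.lt_succ_iff_lt_or_eq.mp (Nat.lt_succ_of_le hi) with h | h
      · exact le_trans (ih (Nat.le_of_succ_le hj) i (Nat.lt_succ_iff.mp h))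
          (le_of_lt (hmono n (Nat.lt_of_succ_le hj)))
      · exact le_of_eq (by rw [h])
  have h1 : 1 ≤ rf 1 := by
    have := hmono 0 (by omega); simp at this; omega
  have h2 : rf 1 + 1 ≤ r := by
    have ha := hmono 1 (by omega); norm_num at ha
    have hb := mono l le_rfl 2 hl
    omega
  have hsum : 0 ≤ ∑ i ∈ Finset.Ico 1 l, (r - rf (i + 1)) * (rf (i + 1) - rf i) := by
    apply Finset.sum_nonneg
    intro i hi
    simp only [Finset.mem_Ico] at hi
    have hb := mono l le_rfl (i + 1) hi.2
    have hc := hmono i (by omega)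
    apply mul_nonneg <;> omega
  nlinarith [mul_nonneg (by omega : (0:ℤ) ≤ rf 1 - 1) (by omega : (0:ℤ) ≤ r - rf 1 - 1)]
end

section
/- Fix genus g ≥ 2, rank r ≥ 1, and degree d. For every integer i, there are only finitely many Shatz polygons P for (r,d) whose codimension cod(P) = Σ_{1≤i<j≤l} r'_i r'_j (μ_i − μ_j + g − 1) is less than i. -/
/-- The slope `μ_i = (d_i - d_{i-1})/(r_i - r_{i-1})` of the `i`-th segment of a
polygon with vertices `(rf i, df i)`. -/
noncomputable def shatzSlope (rf df : ℕ → ℤ) (i : ℕ) : ℚ :=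
  ((df i - df (i - 1) : ℤ) : ℚ) / ((rf i - rf (i - 1) : ℤ) : ℚ)

/-- The codimension `cod(P) = ∑_{1 ≤ i < j ≤ l} r'_i r'_j (μ_i - μ_j + g - 1)` of the
Shatz stratum attached to a polygon with `l` segments and vertices `(rf i, df i)`,
where `r'_i = rf i - rf (i-1)`. -/
noncomputable def shatzCod (g : ℤ) (l : ℕ) (rf df : ℕ → ℤ) : ℚ :=
  ∑ j ∈ Finset.Icc 1 l, ∑ i ∈ Finset.Ico 1 j,
    (((rf i - rf (i - 1)) * (rf j - rf (j - 1)) : ℤ) : ℚ)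
      * (shatzSlope rf df i - shatzSlope rf df j + (g : ℚ) - 1)

/-- A Shatz polygon for `(r, d)`, encoded as a triple `(l, rf, df)`: vertices
`(rf k, df k)` for `0 ≤ k ≤ l` going from `(0,0)` to `(r,d)`, with strictly
increasing first coordinates and strictly decreasing slopes (the data is frozen
at `(r,d)` beyond index `l` to pin the encoding down). -/
def IsShatzPolygon (r d : ℤ) (P : ℕ × (ℕ → ℤ) × (ℕ → ℤ)) : Prop :=
  1 ≤ P.1 ∧ P.2.1 0 = 0 ∧ P.2.2 0 = 0 ∧ P.2.1 P.1 = r ∧ P.2.2 P.1 = d ∧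
  (∀ k < P.1, P.2.1 k < P.2.1 (k + 1)) ∧
  (∀ k, P.1 ≤ k → P.2.1 k = r ∧ P.2.2 k = d) ∧
  (∀ k, 1 ≤ k → k < P.1 → shatzSlope P.2.1 P.2.2 (k + 1) < shatzSlope P.2.1 P.2.2 k)

lemma shatz_key (g r d : ℤ) (hg : 2 ≤ g) (hr : 1 ≤ r) (i : ℤ)
    (l : ℕ) (rf df : ℕ → ℤ)
    (hP : IsShatzPolygon r d (l, rf, df))
    (hcod : shatzCod g l rf df < (i : ℚ)) :
    l ≤ r.toNat ∧ ∀ k, 0 ≤ rf k ∧ rf k ≤ r ∧ |df k| ≤ (|d| + |i|) * r := by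
  obtain ⟨hl, hrf0, hdf0, hrfl, hdfl, hinc, hfro, hdec⟩ := hP
  simp only at hl hrf0 hdf0 hrfl hdfl hinc hfro hdec
  -- monotonicity of rf on [0, l]
  have hmono : ∀ b a : ℕ, a ≤ b → b ≤ l → rf a ≤ rf b := by
    intro b
    induction b with
    | zero => intro a h _; interval_cases a; exact le_rfl
    | succ n ih =>
      intro a hab hbl
      rcases Nat.lt_or_ge a (n + 1) with h | h
      · exact le_trans (ih a (by omega) (by omega)) (le_of_lt (hinc n (by omega)))
      · have : a = n + 1 := by omega
        rw [this]
  have hge : ∀ k, k ≤ l → (k : ℤ) ≤ rf k := by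
    intro k
    induction k with
    | zero => intro _; simp [hrf0]
    | succ n ih =>
      intro h
      have h1 := hinc n (by omega)
      have h2 := ih (by omega)
      push_cast
      omega
  have hlr : l ≤ r.toNat := by
    rw [Int.le_toNat (by omega)]
    rw [← hrfl]
    exact hge l le_rfl
  have hrb : ∀ k, 0 ≤ rf k ∧ rf k ≤ r := by
    intro k
    rcases le_or_gt k l with h | h
    · constructor
      · rw [← hrf0]; exact hmono k 0 (Nat.zero_le _) h
      · rw [← hrfl]; exact hmono l k h le_rfl
    · rw [(hfro k (le_of_lt h)).1]
      omega
  have hcpos : ∀ j, 1 ≤ j → j ≤ l → 0 < rf j - rf (j - 1) := by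
    intro j h1 h2
    have h3 := hinc (j - 1) (by omega)
    have hj : j - 1 + 1 = j := by omega
    rw [hj] at h3
    omega
  have hanti : ∀ b a, 1 ≤ a → a ≤ b → b ≤ l → shatzSlope rf df b ≤ shatzSlope rf df a := by
    intro b
    induction b with
    | zero => intro a h1 hab _; omega
    | succ n ih =>
      intro a h1 hab hbl
      rcases Nat.lt_or_ge a (n + 1) with h | h
      · exact le_trans (le_of_lt (hdec n (by omega) (by omega))) (ih a h1 (by omega) (by omega))
      · have : a = n + 1 := by omega
        rw [this]
  -- representation of df and rf as sums over segments
  have hrepr : ∀ k, k ≤ l →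
      ((df k : ℚ) = ∑ j ∈ Finset.Icc 1 k,
          ((rf j - rf (j - 1) : ℤ) : ℚ) * shatzSlope rf df j) ∧
      ((rf k : ℚ) = ∑ j ∈ Finset.Icc 1 k, ((rf j - rf (j - 1) : ℤ) : ℚ)) := by
    intro k
    induction k with
    | zero => intro _; simp [hrf0, hdf0]
    | succ n ih =>
      intro h
      obtain ⟨ih1, ih2⟩ := ih (by omega)
      have hc0 : ((rf (n + 1) - rf n : ℤ) : ℚ) ≠ 0 := by
        have := hcpos (n + 1) (by omega) h
        simp only [Nat.add_sub_cancel] at this ⊢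
        exact_mod_cast ne_of_gt (by exact_mod_cast this)
      constructor
      · rw [Finset.sum_Icc_succ_top (by omega), ← ih1]
        have hterm : ((rf (n + 1) - rf (n + 1 - 1) : ℤ) : ℚ) * shatzSlope rf df (n + 1)
            = ((df (n + 1) - df n : ℤ) : ℚ) := by
          unfold shatzSlope
          simp only [Nat.add_sub_cancel]
          rw [mul_comm, div_mul_cancel₀]
          exact hc0
        simp only [Nat.add_sub_cancel] at hterm ⊢
        rw [hterm]
        push_cast
        ring
      · rw [Finset.sum_Icc_succ_top (by omega), ← ih2]
        simp only [Nat.add_sub_cancel]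
        push_cast
        ring
  have hg' : (2 : ℚ) ≤ (g : ℚ) := by exact_mod_cast hg
  have hr0 : (0 : ℚ) < (r : ℚ) := Int.cast_pos.mpr (by omega)
  have hr1 : (1 : ℚ) ≤ (r : ℚ) := by exact_mod_cast hr
  have hcnn : ∀ j, 1 ≤ j → j ≤ l → (0 : ℚ) ≤ ((rf j - rf (j - 1) : ℤ) : ℚ) := by
    intro j h1 h2
    exact_mod_cast (hcpos j h1 h2).le
  have hterm : ∀ a b, 1 ≤ a → a < b → b ≤ l →
      0 ≤ (((rf a - rf (a - 1)) * (rf b - rf (b - 1)) : ℤ) : ℚ)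
        * (shatzSlope rf df a - shatzSlope rf df b + (g : ℚ) - 1) := by
    intro a b h1 h2 h3
    apply mul_nonneg
    · have a1 := hcpos a h1 (by omega)
      have a2 := hcpos b (by omega) h3
      exact_mod_cast (mul_pos a1 a2).le
    · have := hanti b a h1 (le_of_lt h2) h3
      linarith
  have hcodnn : 0 ≤ shatzCod g l rf df := by
    unfold shatzCod
    apply Finset.sum_nonneg
    intro j hj
    apply Finset.sum_nonneg
    intro a ha
    rw [Finset.mem_Icc] at hj
    rw [Finset.mem_Ico] at ha
    exact hterm a j ha.1 ha.2 hj.2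
  have hipos : 0 < i := by
    have : (0 : ℚ) < (i : ℚ) := lt_of_le_of_lt hcodnn hcod
    exact_mod_cast this
  have hi1 : (1 : ℚ) ≤ (i : ℚ) := by exact_mod_cast hipos
  have hiabs : |i| = i := abs_of_pos hipos
  have hdsum : (d : ℚ) = ∑ j ∈ Finset.Icc 1 l,
      ((rf j - rf (j - 1) : ℤ) : ℚ) * shatzSlope rf df j := by
    rw [← hdfl]; exact (hrepr l le_rfl).1
  have hrsum : (r : ℚ) = ∑ j ∈ Finset.Icc 1 l, ((rf j - rf (j - 1) : ℤ) : ℚ) := by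
    rw [← hrfl]; exact (hrepr l le_rfl).2
  have hub : (d : ℚ) ≤ (r : ℚ) * shatzSlope rf df 1 := by
    rw [hdsum, hrsum, Finset.sum_mul]
    apply Finset.sum_le_sum
    intro j hj
    rw [Finset.mem_Icc] at hj
    exact mul_le_mul_of_nonneg_left (hanti j 1 le_rfl hj.1 hj.2) (hcnn j hj.1 hj.2)
  have hlb : (r : ℚ) * shatzSlope rf df l ≤ (d : ℚ) := by
    rw [hdsum, hrsum, Finset.sum_mul]
    apply Finset.sum_le_sum
    intro j hj
    rw [Finset.mem_Icc] at hj
    exact mul_le_mul_of_nonneg_left (hanti l j hj.1 hj.2 le_rfl) (hcnn j hj.1 hj.2)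
  have hgap : shatzSlope rf df 1 - shatzSlope rf df l ≤ (i : ℚ) - 1 := by
    rcases eq_or_lt_of_le hl with h | h
    · rw [← h]
      simp only [sub_self]
      linarith
    · have hFnn : ∀ j ∈ Finset.Icc 1 l, 0 ≤ ∑ a ∈ Finset.Ico 1 j,
          (((rf a - rf (a - 1)) * (rf j - rf (j - 1)) : ℤ) : ℚ)
            * (shatzSlope rf df a - shatzSlope rf df j + (g : ℚ) - 1) := by
        intro j hj
        rw [Finset.mem_Icc] at hj
        apply Finset.sum_nonneg
        intro a ha
        rw [Finset.mem_Ico] at ha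
        exact hterm a j ha.1 ha.2 hj.2
      have h1 : (∑ a ∈ Finset.Ico 1 l,
          (((rf a - rf (a - 1)) * (rf l - rf (l - 1)) : ℤ) : ℚ)
            * (shatzSlope rf df a - shatzSlope rf df l + (g : ℚ) - 1))
          ≤ shatzCod g l rf df :=
        Finset.single_le_sum hFnn (Finset.mem_Icc.mpr ⟨hl, le_rfl⟩)
      have h2 : (((rf 1 - rf (1 - 1)) * (rf l - rf (l - 1)) : ℤ) : ℚ)
            * (shatzSlope rf df 1 - shatzSlope rf df l + (g : ℚ) - 1)
          ≤ ∑ a ∈ Finset.Ico 1 l,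
          (((rf a - rf (a - 1)) * (rf l - rf (l - 1)) : ℤ) : ℚ)
            * (shatzSlope rf df a - shatzSlope rf df l + (g : ℚ) - 1) := by
        apply Finset.single_le_sum (f := fun a =>
          (((rf a - rf (a - 1)) * (rf l - rf (l - 1)) : ℤ) : ℚ)
            * (shatzSlope rf df a - shatzSlope rf df l + (g : ℚ) - 1))
          (fun a ha => ?_) (Finset.mem_Ico.mpr ⟨le_rfl, h⟩)
        rw [Finset.mem_Ico] at ha
        exact hterm a l ha.1 ha.2 le_rfl
      have hK : (1 : ℚ) ≤ (((rf 1 - rf (1 - 1)) * (rf l - rf (l - 1)) : ℤ) : ℚ) := by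
        have a1 := hcpos 1 le_rfl hl
        have a2 := hcpos l hl le_rfl
        have : (1 : ℤ) ≤ (rf 1 - rf (1 - 1)) * (rf l - rf (l - 1)) := by
          calc (1:ℤ) = 1 * 1 := by ring
          _ ≤ _ := mul_le_mul a1 a2 one_pos.le (by omega)
        exact_mod_cast this
      have hbr : (0 : ℚ) ≤ shatzSlope rf df 1 - shatzSlope rf df l := by
        have := hanti l 1 le_rfl hl le_rfl
        linarith
      nlinarith [h1, h2, hK, hbr, hcod, hg']
  have hdr_ub : (d : ℚ) / (r : ℚ) ≤ |(d : ℚ)| := by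
    rw [div_le_iff₀ hr0]
    nlinarith [abs_nonneg (d : ℚ), le_abs_self (d : ℚ)]
  have hdr_lb : -|(d : ℚ)| ≤ (d : ℚ) / (r : ℚ) := by
    rw [le_div_iff₀ hr0]
    nlinarith [abs_nonneg (d : ℚ), neg_abs_le (d : ℚ)]
  have hld : shatzSlope rf df l ≤ (d : ℚ) / (r : ℚ) := by
    rw [le_div_iff₀ hr0]
    nlinarith [hlb]
  have h1d : (d : ℚ) / (r : ℚ) ≤ shatzSlope rf df 1 := by
    rw [div_le_iff₀ hr0]
    nlinarith [hub]
  have hμub : ∀ j, 1 ≤ j → j ≤ l → shatzSlope rf df j ≤ |(d : ℚ)| + (i : ℚ) := by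
    intro j h1 h2
    have ha := hanti j 1 le_rfl h1 h2
    linarith
  have hμlb : ∀ j, 1 ≤ j → j ≤ l → -(|(d : ℚ)| + (i : ℚ)) ≤ shatzSlope rf df j := by
    intro j h1 h2
    have ha := hanti l j h1 h2 le_rfl
    linarith
  refine ⟨hlr, fun k => ⟨(hrb k).1, (hrb k).2, ?_⟩⟩
  rcases le_or_gt k l with h | h
  · have hq : |(df k : ℚ)| ≤ (((|d| + |i|) * r : ℤ) : ℚ) := by
      rw [(hrepr k h).1]
      calc |∑ j ∈ Finset.Icc 1 k, ((rf j - rf (j - 1) : ℤ) : ℚ) * shatzSlope rf df j|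
          ≤ ∑ j ∈ Finset.Icc 1 k, |((rf j - rf (j - 1) : ℤ) : ℚ) * shatzSlope rf df j| :=
            Finset.abs_sum_le_sum_abs _ _
        _ ≤ ∑ j ∈ Finset.Icc 1 k, ((rf j - rf (j - 1) : ℤ) : ℚ) * (|(d : ℚ)| + (i : ℚ)) := by
            apply Finset.sum_le_sum
            intro j hj
            rw [Finset.mem_Icc] at hj
            have hj2 : j ≤ l := le_trans hj.2 h
            rw [abs_mul, abs_of_nonneg (hcnn j hj.1 hj2)]
            exact mul_le_mul_of_nonneg_left
              (abs_le.mpr ⟨hμlb j hj.1 hj2, hμub j hj.1 hj2⟩) (hcnn j hj.1 hj2)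
        _ = (rf k : ℚ) * (|(d : ℚ)| + (i : ℚ)) := by
            rw [← Finset.sum_mul, ← (hrepr k h).2]
        _ ≤ (r : ℚ) * (|(d : ℚ)| + (i : ℚ)) := by
            have h1 : (rf k : ℚ) ≤ (r : ℚ) := by exact_mod_cast (hrb k).2
            nlinarith [abs_nonneg (d : ℚ)]
        _ = (((|d| + |i|) * r : ℤ) : ℚ) := by
            rw [hiabs]
            push_cast
            ring
    exact_mod_cast hq
  · rw [(hfro k (le_of_lt h)).2]
    nlinarith [abs_nonneg d, abs_nonneg i, le_abs_self d, hr]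

/-- For fixed genus `g ≥ 2`, rank `r ≥ 1` and degree `d`, and any integer `i`,
only finitely many Shatz polygons `P` for `(r,d)` have codimension `cod(P) < i`. -/
theorem stmt_17 (g r d : ℤ) (hg : 2 ≤ g) (hr : 1 ≤ r) (i : ℤ) :
    {P : ℕ × (ℕ → ℤ) × (ℕ → ℤ) |
      IsShatzPolygon r d P ∧ shatzCod g P.1 P.2.1 P.2.2 < (i : ℚ)}.Finite := by
  classical
  set B : ℤ := (|d| + |i|) * r with hB
  set R : ℕ := r.toNat + 1 with hR
  have hT : (Set.Icc 0 r.toNat ×ˢ Set.univ.pi fun _ : Fin R =>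
      Set.Icc (0 : ℤ) r ×ˢ Set.Icc (-B) B).Finite :=
    (Set.finite_Icc _ _).prod
      (Set.Finite.pi fun _ => (Set.finite_Icc _ _).prod (Set.finite_Icc _ _))
  apply Set.Finite.of_finite_image
      (f := fun P : ℕ × (ℕ → ℤ) × (ℕ → ℤ) => (P.1, fun k : Fin R => (P.2.1 k, P.2.2 k)))
  · apply hT.subset
    rintro _ ⟨P, hP, rfl⟩
    obtain ⟨l, rf, df⟩ := P
    obtain ⟨hmem, hc⟩ := hP
    obtain ⟨hkey1, hkey2⟩ := shatz_key g r d hg hr i l rf df hmem hc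
    rw [Set.mem_prod]
    constructor
    · exact Set.mem_Icc.mpr ⟨Nat.zero_le _, hkey1⟩
    · rw [Set.mem_univ_pi]
      intro k
      obtain ⟨a, b, c⟩ := hkey2 k
      obtain ⟨c1, c2⟩ := abs_le.mp c
      exact Set.mem_prod.mpr ⟨Set.mem_Icc.mpr ⟨a, b⟩, Set.mem_Icc.mpr ⟨c1, c2⟩⟩
  · rintro ⟨l1, rf1, df1⟩ h1 ⟨l2, rf2, df2⟩ h2 heq
    obtain ⟨hm1, hc1⟩ := h1
    obtain ⟨hm2, hc2⟩ := h2
    have hkey1 := shatz_key g r d hg hr i l1 rf1 df1 hm1 hc1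
    have hkey2 := shatz_key g r d hg hr i l2 rf2 df2 hm2 hc2
    simp only [Prod.mk.injEq] at heq ⊢
    obtain ⟨hleq, hfun⟩ := heq
    have happ : ∀ k : ℕ, k < R → rf1 k = rf2 k ∧ df1 k = df2 k := by
      intro k hk
      have h := congrFun hfun ⟨k, hk⟩
      exact ⟨congrArg Prod.fst h, congrArg Prod.snd h⟩
    obtain ⟨_, _, _, _, _, _, hfro1, _⟩ := hm1
    obtain ⟨_, _, _, _, _, _, hfro2, _⟩ := hm2
    simp only at hfro1 hfro2
    have hl1 := hkey1.1
    have hl2 := hkey2.1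
    refine ⟨hleq, funext fun k => ?_, funext fun k => ?_⟩
    · rcases Nat.lt_or_ge k R with hk | hk
      · exact (happ k hk).1
      · rw [(hfro1 k (by omega)).1, (hfro2 k (by omega)).1]
    · rcases Nat.lt_or_ge k R with hk | hk
      · exact (happ k hk).2
      · rw [(hfro1 k (by omega)).2, (hfro2 k (by omega)).2]
end
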